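/- arXiv:2007.09302 — 2 statements merged into one kernel-verified Lean document; each statement's English description precedes it below -/
import Mathlib

section
/- Let E_A and E_B be commuting self-adjoint projectors with E_B E_A = E_A, and let δE_A, δE_B be self-adjoint matrices satisfying δE_A·E_A + E_A·δE_A = δE_A, δE_B·E_B + E_B·δE_B = δE_B, and δE_B·E_A + E_B·δE_A = δE_A. Then [iE_B, δE_B]·E_A + E_B·[iE_A, δE_A] = [iE_A, δE_A]. -/
open Matrix

/-- The key computation showing that nested-flag orbits are complex
submanifolds: for nested commuting self-adjoint projectors E_A, E_B and
tangent vectors δE_A, δE_B satisfying the derived flag relations, one has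
[iE_B, δE_B]·E_A + E_B·[iE_A, δE_A] = [iE_A, δE_A]. -/
theorem nested_flag_complex_submanifold_computation (n : ℕ)
    (EA EB dA dB : Matrix (Fin n) (Fin n) ℂ)
    (hEA : EA * EA = EA) (hEB : EB * EB = EB)
    (hEAsa : EAᴴ = EA) (hEBsa : EBᴴ = EB)
    (hBA : EB * EA = EA) (hAB : EA * EB = EA)
    (hdAsa : dAᴴ = dA) (hdBsa : dBᴴ = dB)
    (htA : dA * EA + EA * dA = dA) (htB : dB * EB + EB * dB = dB)
    (htAB : dB * EA + EB * dA = dA) :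
    ((Complex.I • EB) * dB - dB * (Complex.I • EB)) * EA +
      EB * ((Complex.I • EA) * dA - dA * (Complex.I • EA)) =
    (Complex.I • EA) * dA - dA * (Complex.I • EA) := by
  have h1 : EB * dB * EA = 0 := by
    have h := congrArg (EB * ·) htAB
    simp only [mul_add, ← mul_assoc, hEB] at h
    exact add_eq_right.mp h
  have h2 : EB * dA = dA - dB * EA := eq_sub_of_add_eq' htAB
  have key : (EB * dB - dB * EB) * EA + EB * (EA * dA - dA * EA)
      = EA * dA - dA * EA := by
    have e1 : (EB * dB - dB * EB) * EA
        = EB * dB * EA - dB * (EB * EA) := by noncomm_ring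
    have e2 : EB * (EA * dA - dA * EA)
        = (EB * EA) * dA - (EB * dA) * EA := by noncomm_ring
    rw [e1, e2, h1, hBA, h2, sub_mul, mul_assoc, hEA]
    noncomm_ring
  calc ((Complex.I • EB) * dB - dB * (Complex.I • EB)) * EA +
        EB * ((Complex.I • EA) * dA - dA * (Complex.I • EA))
      = Complex.I • ((EB * dB - dB * EB) * EA + EB * (EA * dA - dA * EA)) := by
        simp only [sub_mul, mul_sub, smul_mul_assoc, mul_smul_comm, smul_sub, smul_add]
    _ = Complex.I • (EA * dA - dA * EA) := by rw [key]
    _ = (Complex.I • EA) * dA - dA * (Complex.I • EA) := by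
        simp only [smul_sub, smul_mul_assoc, mul_smul_comm]
end

section
/- Let x = g λ g⁻¹ for a unitary g and λ real diagonal. Then the operator ad_{ix} on self-adjoint matrices is diagonalizable over ℂ with spectrum {i(λ_r - λ_s) : r,s diagonal entries of λ}; consequently the Lagrange interpolation formula I_x = Σ_{δ∈Δ∖{0}} i·sign(δ/i)·Π_{ε∈Δ∖{0,δ}} (ad_{ix} - ε)/(δ - ε) defines an operator on the image of ad_{ix} squaring to minus the identity. -/
open Matrix Polynomial

private theorem eval_lagrange' (S : Finset ℂ) (c : ℂ → ℂ) (μ : ℂ) (hμ : μ ∈ S) :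
    eval μ (∑ δ ∈ S, C (c δ) * ∏ ε ∈ S.erase δ, (C ((δ - ε)⁻¹) * (X - C ε))) = c μ := by
  rw [eval_finset_sum]
  rw [Finset.sum_eq_single μ]
  · rw [eval_mul, eval_C, eval_prod]
    rw [Finset.prod_eq_one, mul_one]
    intro ε hε
    have hne : μ - ε ≠ 0 := sub_ne_zero.mpr (Ne.symm (Finset.ne_of_mem_erase hε))
    rw [eval_mul, eval_C, eval_sub, eval_X, eval_C, inv_mul_cancel₀ hne]
  · intro δ hδ hδμ
    rw [eval_mul, eval_prod]
    rw [Finset.prod_eq_zero (Finset.mem_erase.mpr ⟨Ne.symm hδμ, hμ⟩), mul_zero]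
    simp
  · intro h; exact absurd hμ h

private theorem diag_mul_std' (n : ℕ) (d : Fin n → ℂ) (r s : Fin n) :
    diagonal d * Matrix.single r s (1:ℂ) = d r • Matrix.single r s 1 := by
  ext i j
  simp only [Matrix.diagonal_mul, Matrix.smul_apply, Matrix.single, Matrix.of_apply,
    smul_eq_mul]
  aesop

private theorem std_mul_diag' (n : ℕ) (d : Fin n → ℂ) (r s : Fin n) :
    Matrix.single r s (1:ℂ) * diagonal d = d s • Matrix.single r s 1 := by
  ext i j
  simp only [Matrix.mul_diagonal, Matrix.smul_apply, Matrix.single, Matrix.of_apply,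
    smul_eq_mul]
  aesop

/-- For x = gλg⁻¹ with g unitary and λ real diagonal, ad_{ix} is
diagonalizable with spectrum Δ = {i(λ_r - λ_s)}, and the Lagrange
interpolation formula I_x = Σ_{δ∈Δ∖{0}} i·sign(δ/i)·Π_{ε∈Δ∖{0,δ}}
(ad_{ix}-ε)/(δ-ε) defines an operator squaring to minus the identity on the
image of ad_{ix}. -/
theorem ad_diagonalizable_and_lagrange_I (n : ℕ) (lam : Fin n → ℝ)
    (g : Matrix (Fin n) (Fin n) ℂ) (hg : gᴴ * g = 1)
    (x : Matrix (Fin n) (Fin n) ℂ)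
    (hx : x = g * diagonal (fun i => (lam i : ℂ)) * gᴴ)
    (L : Module.End ℂ (Matrix (Fin n) (Fin n) ℂ))
    (hL : ∀ Z, L Z = (Complex.I • x) * Z - Z * (Complex.I • x))
    (Δ : Finset ℂ)
    (hΔ : Δ = Finset.image
      (fun p : Fin n × Fin n => Complex.I * ((lam p.1 : ℂ) - (lam p.2 : ℂ)))
      Finset.univ)
    (Ix : Module.End ℂ (Matrix (Fin n) (Fin n) ℂ))
    (hIx : Ix = aeval L (∑ δ ∈ Δ.erase 0,
      C (Complex.I * (Real.sign δ.im : ℂ)) *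
        ∏ ε ∈ (Δ.erase 0).erase δ, (C ((δ - ε)⁻¹) * (X - C ε)))) :
    (⨆ μ : ℂ, Module.End.eigenspace L μ) = ⊤ ∧
    {μ : ℂ | Module.End.HasEigenvalue L μ} = ↑Δ ∧
    ∀ Z, Ix (Ix (L Z)) = -(L Z) := by
  have hgg : g * gᴴ = 1 := mul_eq_one_comm.mp hg
  set D := diagonal (fun i => (lam i : ℂ)) with hD
  -- conjugation lemma
  have conj : ∀ W, L (g * W * gᴴ) = g * (Complex.I • (D * W - W * D)) * gᴴ := by
    intro W
    rw [hL, hx]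
    have h1 : (g * D * gᴴ) * (g * W * gᴴ) = g * (D * W) * gᴴ := by
      calc (g * D * gᴴ) * (g * W * gᴴ) = g * D * (gᴴ * g) * (W * gᴴ) := by noncomm_ring
      _ = g * (D * W) * gᴴ := by rw [hg]; noncomm_ring
    have h2 : (g * W * gᴴ) * (g * D * gᴴ) = g * (W * D) * gᴴ := by
      calc (g * W * gᴴ) * (g * D * gᴴ) = g * W * (gᴴ * g) * (D * gᴴ) := by noncomm_ring
      _ = g * (W * D) * gᴴ := by rw [hg]; noncomm_ring
    rw [smul_mul_assoc, mul_smul_comm, h1, h2, ← smul_sub, mul_smul_comm, smul_mul_assoc,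
      mul_sub, sub_mul]
  have cancel : ∀ A B : Matrix (Fin n) (Fin n) ℂ, g * A * gᴴ = g * B * gᴴ → A = B := by
    intro A B h
    have h' : gᴴ * (g * A * gᴴ) * g = gᴴ * (g * B * gᴴ) * g := by rw [h]
    have hc : ∀ C : Matrix (Fin n) (Fin n) ℂ, gᴴ * (g * C * gᴴ) * g = C := by
      intro C
      calc gᴴ * (g * C * gᴴ) * g = (gᴴ * g) * C * (gᴴ * g) := by noncomm_ring
      _ = C := by rw [hg]; noncomm_ring
    rwa [hc, hc] at h'
  -- eigenvector computation
  have key : ∀ r s : Fin n, L (g * Matrix.single r s 1 * gᴴ) =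
      (Complex.I * ((lam r : ℂ) - (lam s : ℂ))) • (g * Matrix.single r s 1 * gᴴ) := by
    intro r s
    rw [conj, hD, diag_mul_std', std_mul_diag', ← sub_smul, smul_smul, mul_smul_comm,
      smul_mul_assoc]
  have hne : ∀ r s : Fin n, g * Matrix.single r s 1 * gᴴ ≠ 0 := by
    intro r s h
    have h2 : (Matrix.single r s (1:ℂ)) = 0 := cancel _ _ (by rw [h]; simp)
    have h3 := congrFun (congrFun h2 r) s
    simp at h3
  have hev : ∀ r s : Fin n, Module.End.HasEigenvector L
      (Complex.I * ((lam r : ℂ) - (lam s : ℂ))) (g * Matrix.single r s 1 * gᴴ) :=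
    fun r s => ⟨Module.End.mem_eigenspace_iff.mpr (key r s), hne r s⟩
  -- decomposition
  have decomp : ∀ Z : Matrix (Fin n) (Fin n) ℂ, Z = ∑ p : Fin n × Fin n,
      (gᴴ * Z * g) p.1 p.2 • (g * Matrix.single p.1 p.2 1 * gᴴ) := by
    intro Z
    have hW : g * (gᴴ * Z * g) * gᴴ = Z := by
      calc g * (gᴴ * Z * g) * gᴴ = (g * gᴴ) * Z * (g * gᴴ) := by noncomm_ring
      _ = Z := by rw [hgg]; noncomm_ring
    conv_lhs => rw [← hW, matrix_eq_sum_single (gᴴ * Z * g)]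
    rw [← Finset.sum_product', Finset.mul_sum, Finset.sum_mul]
    refine Finset.sum_congr rfl fun p _ => ?_
    rw [show Matrix.single p.1 p.2 ((gᴴ * Z * g) p.1 p.2)
        = (gᴴ * Z * g) p.1 p.2 • Matrix.single p.1 p.2 1 by
      rw [Matrix.smul_single]; norm_num]
    rw [mul_smul_comm, smul_mul_assoc]
  refine ⟨?_, ?_, ?_⟩
  · -- diagonalizable
    rw [eq_top_iff]
    intro Z _
    rw [decomp Z]
    refine Submodule.sum_mem _ fun p _ => Submodule.smul_mem _ _ ?_
    exact le_iSup (fun μ => Module.End.eigenspace L μ) (Complex.I * ((lam p.1 : ℂ) - lam p.2))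
      (Module.End.mem_eigenspace_iff.mpr (key p.1 p.2))
  · -- spectrum
    ext μ
    simp only [Set.mem_setOf_eq, hΔ, Finset.coe_image, Set.mem_image, Finset.mem_coe,
      Finset.mem_univ, true_and]
    constructor
    · intro hμ
      obtain ⟨v, hv⟩ := hμ.exists_hasEigenvector
      set W := gᴴ * v * g with hWdef
      have hvW : g * W * gᴴ = v := by
        calc g * (gᴴ * v * g) * gᴴ = (g * gᴴ) * v * (g * gᴴ) := by noncomm_ring
        _ = v := by rw [hgg]; noncomm_ring
      have hW0 : W ≠ 0 := by
        intro h
        apply hv.2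
        rw [← hvW, h, mul_zero, zero_mul]
      have heq : Complex.I • (D * W - W * D) = μ • W := by
        apply cancel
        rw [← conj, hvW, hv.apply_eq_smul, ← hvW, mul_smul_comm, smul_mul_assoc]
      obtain ⟨r, s, hrs⟩ : ∃ r s, W r s ≠ 0 := by
        by_contra h
        push_neg at h
        exact hW0 (Matrix.ext h)
      have hent := congrFun (congrFun heq r) s
      simp only [Matrix.smul_apply, Matrix.sub_apply, hD, Matrix.diagonal_mul,
        Matrix.mul_diagonal, smul_eq_mul] at hent
      have : (Complex.I * ((lam r : ℂ) - lam s)) * W r s = μ * W r s := by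
        rw [← hent]; ring
      exact ⟨(r, s), mul_right_cancel₀ hrs this⟩
    · rintro ⟨p, hp⟩
      rw [← hp]
      exact Module.End.hasEigenvalue_of_hasEigenvector (hev p.1 p.2)
  · -- Ix squares to -1 on the image
    have sq : ∀ r s : Fin n, Ix (Ix (L (g * Matrix.single r s 1 * gᴴ))) =
        -(L (g * Matrix.single r s 1 * gᴴ)) := by
      intro r s
      set μ := Complex.I * ((lam r : ℂ) - lam s) with hμdef
      set v := g * Matrix.single r s 1 * gᴴ with hv
      have hIxv : Ix v = eval μ (∑ δ ∈ Δ.erase 0,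
          C (Complex.I * (Real.sign δ.im : ℂ)) *
            ∏ ε ∈ (Δ.erase 0).erase δ, (C ((δ - ε)⁻¹) * (X - C ε))) • v := by
        rw [hIx]
        exact Module.End.aeval_apply_of_hasEigenvector (hev r s)
      by_cases hμ0 : μ = 0
      · rw [key, ← hμdef, hμ0, zero_smul, map_zero, map_zero, neg_zero]
      · have hμΔ : μ ∈ Δ.erase 0 := by
          refine Finset.mem_erase.mpr ⟨hμ0, ?_⟩
          rw [hΔ]
          exact Finset.mem_image.mpr ⟨(r, s), Finset.mem_univ _, rfl⟩
        have heval : eval μ (∑ δ ∈ Δ.erase 0,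
            C (Complex.I * (Real.sign δ.im : ℂ)) *
              ∏ ε ∈ (Δ.erase 0).erase δ, (C ((δ - ε)⁻¹) * (X - C ε)))
            = Complex.I * (Real.sign μ.im : ℂ) :=
          eval_lagrange' (Δ.erase 0) (fun δ => Complex.I * (Real.sign δ.im : ℂ)) μ hμΔ
        have him : μ.im = lam r - lam s := by
          rw [hμdef]
          simp [Complex.mul_im]
        have hlam : lam r - lam s ≠ 0 := by
          intro h
          apply hμ0
          rw [hμdef]
          rw [show ((lam r : ℂ) - lam s) = ((lam r - lam s : ℝ) : ℂ) by push_cast; ring, h]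
          simp
        have hsign : (Real.sign μ.im : ℂ) * (Real.sign μ.im : ℂ) = 1 := by
          rw [him]
          rcases lt_or_gt_of_ne hlam with h | h
          · rw [Real.sign_of_neg h]; norm_num
          · rw [Real.sign_of_pos h]; norm_num
        have hsq : eval μ (∑ δ ∈ Δ.erase 0,
            C (Complex.I * (Real.sign δ.im : ℂ)) *
              ∏ ε ∈ (Δ.erase 0).erase δ, (C ((δ - ε)⁻¹) * (X - C ε)))
            * eval μ (∑ δ ∈ Δ.erase 0,
            C (Complex.I * (Real.sign δ.im : ℂ)) *
              ∏ ε ∈ (Δ.erase 0).erase δ, (C ((δ - ε)⁻¹) * (X - C ε))) = -1 := by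
          rw [heval]
          have : Complex.I * (Real.sign μ.im : ℂ) * (Complex.I * (Real.sign μ.im : ℂ))
              = (Complex.I * Complex.I) * ((Real.sign μ.im : ℂ) * (Real.sign μ.im : ℂ)) := by
            ring
          rw [this, hsign, Complex.I_mul_I, mul_one]
        rw [key, ← hμdef, ← hv]
        rw [Ix.map_smul, hIxv, Ix.map_smul, Ix.map_smul, hIxv, smul_smul, smul_smul, ← neg_smul]
        congr 1
        rw [mul_assoc, hsq]
        ring
    intro Z
    conv_lhs => rw [decomp Z]
    conv_rhs => rw [decomp Z]
    simp only [map_sum]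
    rw [← Finset.sum_neg_distrib]
    refine Finset.sum_congr rfl fun p _ => ?_
    rw [L.map_smul, Ix.map_smul, Ix.map_smul, sq p.1 p.2, smul_neg]
end
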